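/- Let m be a non-negative integer. Then for all real numbers x and y, ∑_{q ⊢ m} (x^{\underline{q}} / q!) · (y^{\underline{|[q]|}} / [q]!) = (xy)^{\underline{m}} / m!, where the sum ranges over all integer partitions q of m. -/

import Mathlib

open Finset Polynomial

noncomputable def gp (x M : ℕ) : Polynomial ℕ := ∑ a ∈ Finset.Icc 1 M, C (x.choose a) * X^a

lemma one_add_gp {x M : ℕ} (hx : x ≤ M) : (1 : Polynomial ℕ) + gp x M = (1+X)^x := by
  ext n
  rw [coeff_one_add_X_pow]
  simp only [gp, coeff_add, coeff_one, finset_sum_coeff, coeff_C_mul, coeff_X_pow,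
    mul_ite, mul_one, mul_zero, Finset.sum_ite_eq (Finset.Icc 1 M) n, Nat.cast_id]
  rcases Nat.eq_zero_or_pos n with rfl | hn
  · simp
  · rw [if_neg hn.ne', zero_add]
    by_cases h : n ∈ Finset.Icc 1 M
    · rw [if_pos h]
    · rw [if_neg h, Nat.choose_eq_zero_of_lt (by simp [Finset.mem_Icc] at h; omega)]

lemma gp_coeff_zero (x M : ℕ) : (gp x M).coeff 0 = 0 := by
  simp only [gp, finset_sum_coeff, coeff_C_mul, coeff_X_pow]
  apply Finset.sum_eq_zero
  intro a ha
  rw [Finset.mem_Icc] at ha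
  rw [if_neg (by omega), mul_zero]

lemma coeff_gp_pow_eq_zero {x M m k : ℕ} (h : m < k) : ((gp x M)^k).coeff m = 0 := by
  obtain ⟨r, hr⟩ : X^k ∣ (gp x M)^k := pow_dvd_pow_of_dvd (X_dvd_iff.2 (gp_coeff_zero x M)) k
  rw [hr, mul_comm, coeff_mul_X_pow', if_neg (by omega)]

lemma rhs_eq (m x y : ℕ) {M : ℕ} (hx : x ≤ M) :
    ((x*y).choose m : ℕ) = (∑ k ∈ Finset.range (m+1), C (y.choose k) * (gp x M)^k).coeff m := by
  have h1 : ((1+X : Polynomial ℕ)^(x*y)) = ∑ k ∈ Finset.range (y+1),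
      C (y.choose k) * (gp x M)^k := by
    rw [pow_mul, ← one_add_gp hx, add_comm (1 : Polynomial ℕ), add_pow]
    refine Finset.sum_congr rfl fun k hk => ?_
    rw [one_pow, mul_one, mul_comm, ← C_eq_natCast, Nat.cast_id]
  have hterm : ∀ k, m < k ∨ y < k → (C (y.choose k) * (gp x M)^k).coeff m = 0 := by
    intro k hk
    rcases hk with hk | hk
    · rw [coeff_C_mul, coeff_gp_pow_eq_zero hk, mul_zero]
    · rw [Nat.choose_eq_zero_of_lt hk, map_zero, zero_mul, coeff_zero]
  have e1 : ∑ k ∈ Finset.range (y+1), (C (y.choose k) * (gp x M)^k).coeff m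
      = ∑ k ∈ Finset.range (max y m + 1), (C (y.choose k) * (gp x M)^k).coeff m :=
    Finset.sum_subset (Finset.range_subset_range.2 (by omega))
      (fun k _ hk => hterm k (Or.inr (by simp at hk; omega)))
  have e2 : ∑ k ∈ Finset.range (m+1), (C (y.choose k) * (gp x M)^k).coeff m
      = ∑ k ∈ Finset.range (max y m + 1), (C (y.choose k) * (gp x M)^k).coeff m :=
    Finset.sum_subset (Finset.range_subset_range.2 (by omega))
      (fun k _ hk => hterm k (Or.inl (by simp at hk; omega)))
  have := congrArg (fun p => Polynomial.coeff p m) h1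
  simp only [finset_sum_coeff] at this ⊢
  rw [e2, ← e1, ← this, coeff_one_add_X_pow, Nat.cast_id]

section PartFacts
variable {m M : ℕ}

lemma part_sub (q : Nat.Partition m) (hm : m ≤ M) : q.parts.toFinset ⊆ Finset.Icc 1 M := by
  intro a ha
  rw [Multiset.mem_toFinset] at ha
  rw [Finset.mem_Icc]
  refine ⟨q.parts_pos ha, le_trans ?_ hm⟩
  calc a ≤ q.parts.sum := Multiset.single_le_sum (fun _ _ => Nat.zero_le _) a ha
  _ = m := q.parts_sum

lemma part_count_sum (q : Nat.Partition m) (hm : m ≤ M) :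
    ∑ a ∈ Finset.Icc 1 M, q.parts.count a = Multiset.card q.parts :=
  Multiset.sum_count_eq_card (fun a ha => part_sub q hm (Multiset.mem_toFinset.2 ha))

lemma part_weight_sum (q : Nat.Partition m) (hm : m ≤ M) :
    ∑ a ∈ Finset.Icc 1 M, a * q.parts.count a = m := by
  have h := Finset.sum_multiset_count q.parts
  rw [Finset.sum_subset (part_sub q hm)
    (fun a _ ha => by simp [Multiset.count_eq_zero_of_notMem (by simpa using ha)])] at h
  have h2 : ∑ a ∈ Finset.Icc 1 M, a * q.parts.count a
      = ∑ a ∈ Finset.Icc 1 M, q.parts.count a • a :=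
    Finset.sum_congr rfl fun a _ => by rw [smul_eq_mul, mul_comm]
  rw [h2, ← h, q.parts_sum]

lemma part_card_le (q : Nat.Partition m) (hm : m ≤ M) : Multiset.card q.parts ≤ m := by
  rw [← part_count_sum q hm]
  nth_rewrite 2 [← part_weight_sum q hm]
  refine Finset.sum_le_sum fun a ha => ?_
  rw [Finset.mem_Icc] at ha
  exact Nat.le_mul_of_pos_left _ ha.1

lemma part_multinomial_eq (q : Nat.Partition m) (hm : m ≤ M) :
    Nat.multinomial (Finset.Icc 1 M) (fun a => q.parts.count a)
      = Nat.multinomial q.parts.toFinset (fun a => q.parts.count a) := by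
  unfold Nat.multinomial
  rw [← Finset.sum_subset (part_sub q hm)
      (fun a _ ha => Multiset.count_eq_zero_of_notMem (by simpa using ha)),
    ← Finset.prod_subset (part_sub q hm)
      (fun a _ ha => by simp [Multiset.count_eq_zero_of_notMem (by simpa using ha)])]

lemma part_prod_eq (q : Nat.Partition m) (hm : m ≤ M) (x : ℕ) :
    ∏ a ∈ Finset.Icc 1 M, (x.choose a)^(q.parts.count a) = (q.parts.map (x.choose ·)).prod := by
  rw [Finset.prod_multiset_map_count]
  exact (Finset.prod_subset (part_sub q hm)
    (fun a _ ha => by rw [Multiset.count_eq_zero_of_notMem (by simpa using ha), pow_zero])).symm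

end PartFacts

def muParts (M : ℕ) (μ : ℕ → ℕ) : Multiset ℕ := ∑ a ∈ Finset.Icc 1 M, μ a • ({a} : Multiset ℕ)

lemma muParts_count (M : ℕ) (μ : ℕ → ℕ) (b : ℕ) :
    (muParts M μ).count b = if b ∈ Finset.Icc 1 M then μ b else 0 := by
  rw [muParts, Multiset.count_sum']
  simp only [Multiset.count_nsmul, Multiset.count_singleton, mul_ite, mul_one, mul_zero]
  exact Finset.sum_ite_eq (Finset.Icc 1 M) b μ

lemma muParts_mem {M : ℕ} {μ : ℕ → ℕ} {b : ℕ} (hb : b ∈ muParts M μ) : b ∈ Finset.Icc 1 M := by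
  have h := Multiset.count_pos.2 hb
  rw [muParts_count] at h
  by_contra hc
  rw [if_neg hc] at h
  omega

lemma muParts_sum (M : ℕ) (μ : ℕ → ℕ) :
    (muParts M μ).sum = ∑ a ∈ Finset.Icc 1 M, μ a * a := by
  rw [muParts]
  rw [show (∑ a ∈ Finset.Icc 1 M, μ a • ({a} : Multiset ℕ)).sum
      = ∑ a ∈ Finset.Icc 1 M, (μ a • ({a} : Multiset ℕ)).sum from
    map_sum Multiset.sumAddMonoidHom _ _]
  refine Finset.sum_congr rfl fun a _ => ?_
  rw [Multiset.nsmul_singleton, Multiset.sum_replicate, smul_eq_mul]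

lemma muParts_card (M : ℕ) (μ : ℕ → ℕ) :
    Multiset.card (muParts M μ) = ∑ a ∈ Finset.Icc 1 M, μ a := by
  rw [← Multiset.sum_count_eq_card (fun b hb => muParts_mem hb)]
  exact Finset.sum_congr rfl fun a ha => by rw [muParts_count, if_pos ha]

lemma coeff_eq_sigma_sum (m x y M : ℕ) :
    (∑ k ∈ Finset.range (m+1), C (y.choose k) * (gp x M)^k).coeff m
    = ∑ p ∈ ((Finset.range (m+1)).sigma fun k => Finset.piAntidiag (Finset.Icc 1 M) k).filter
        (fun p => m = ∑ a ∈ Finset.Icc 1 M, a * p.2 a),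
      y.choose p.1 * (Nat.multinomial (Finset.Icc 1 M) p.2
        * ∏ a ∈ Finset.Icc 1 M, (x.choose a)^(p.2 a)) := by
  have hgk : ∀ k, ((gp x M)^k).coeff m = ∑ μ ∈ Finset.piAntidiag (Finset.Icc 1 M) k,
      if m = ∑ a ∈ Finset.Icc 1 M, a * μ a then
        Nat.multinomial (Finset.Icc 1 M) μ * ∏ a ∈ Finset.Icc 1 M, (x.choose a)^(μ a)
      else 0 := by
    intro k
    rw [gp, Finset.sum_pow_eq_sum_piAntidiag, finset_sum_coeff]
    refine Finset.sum_congr rfl fun μ hμ => ?_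
    have hprod : ∏ a ∈ Finset.Icc 1 M, (C (x.choose a) * X^a)^(μ a)
        = C (∏ a ∈ Finset.Icc 1 M, (x.choose a)^(μ a))
          * X^(∑ a ∈ Finset.Icc 1 M, a * μ a) := by
      simp_rw [mul_pow, ← C_pow, ← pow_mul]
      rw [Finset.prod_mul_distrib, ← map_prod, Finset.prod_pow_eq_pow_sum]
    rw [hprod, ← mul_assoc, ← C_eq_natCast, ← map_mul, coeff_C_mul, coeff_X_pow]
    split_ifs <;> simp
  simp only [finset_sum_coeff, coeff_C_mul]
  rw [Finset.sum_congr rfl (fun k (_ : k ∈ Finset.range (m+1)) => by rw [hgk k])]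
  simp only [Finset.mul_sum, mul_ite, mul_zero]
  rw [Finset.sum_sigma', ← Finset.sum_filter]

lemma key (m x y : ℕ) :
    ∑ q : Nat.Partition m, (q.parts.map (x.choose ·)).prod *
      (y.choose (Multiset.card q.parts)
        * Nat.multinomial q.parts.toFinset (fun a => q.parts.count a))
    = (x*y).choose m := by
  have hx : x ≤ max x m := le_max_left _ _
  have hm : m ≤ max x m := le_max_right _ _
  set M := max x m with hM
  rw [rhs_eq m x y hx, coeff_eq_sigma_sum m x y M]
  refine Finset.sum_bij' (fun q _ => (⟨Multiset.card q.parts, fun a => q.parts.count a⟩ :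
      Σ _ : ℕ, ℕ → ℕ))
    (fun p hp =>
      (⟨muParts M p.2, fun {a} ha => (Finset.mem_Icc.1 (muParts_mem ha)).1, by
        rw [Finset.mem_filter] at hp
        rw [muParts_sum, hp.2]
        exact Finset.sum_congr rfl fun a _ => mul_comm _ _⟩ : Nat.Partition m))
    ?_ (fun _ _ => Finset.mem_univ _) ?_ ?_ ?_
  · -- i maps into filter
    intro q _
    rw [Finset.mem_filter, Finset.mem_sigma]
    refine ⟨⟨?_, ?_⟩, (part_weight_sum q hm).symm⟩
    · rw [Finset.mem_range]
      exact Nat.lt_succ_of_le (part_card_le q hm)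
    · rw [Finset.mem_piAntidiag]
      refine ⟨part_count_sum q hm, fun a ha => ?_⟩
      have : a ∈ q.parts := by
        by_contra hc
        exact ha (Multiset.count_eq_zero_of_notMem hc)
      exact part_sub q hm (Multiset.mem_toFinset.2 this)
  · -- j (i q) = q
    intro q _
    apply Nat.Partition.ext
    ext b
    rw [muParts_count]
    by_cases hb : b ∈ Finset.Icc 1 M
    · rw [if_pos hb]
    · rw [if_neg hb]
      refine (Multiset.count_eq_zero_of_notMem fun hc => ?_).symm
      exact hb (part_sub q hm (Multiset.mem_toFinset.2 hc))
  · -- i (j p) = p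
    intro p hp
    rw [Finset.mem_filter, Finset.mem_sigma] at hp
    obtain ⟨⟨hk, hμ⟩, hcond⟩ := hp
    rw [Finset.mem_piAntidiag] at hμ
    refine Sigma.ext ?_ (heq_of_eq ?_)
    · exact (muParts_card M p.2).trans hμ.1
    · funext b
      show Multiset.count b (muParts M p.2) = p.2 b
      rw [muParts_count]
      by_cases hb : b ∈ Finset.Icc 1 M
      · rw [if_pos hb]
      · rw [if_neg hb]
        by_contra hc
        exact hb (hμ.2 b (fun h => hc h.symm))
  · -- summand equality
    intro q _
    simp only []
    rw [← part_multinomial_eq q hm, ← part_prod_eq q hm x]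
    ring

/-- Falling factorial of a real number: `x (x-1) ⋯ (x-n+1)`. -/
def fallFac (x : ℝ) (n : ℕ) : ℝ := ∏ i ∈ Finset.range n, (x - i)

/-- `[q]!`: the product of the factorials of the multiplicities of the parts of `q`. -/
def multFact {m : ℕ} (q : Nat.Partition m) : ℕ :=
  ∏ i ∈ q.parts.toFinset, Nat.factorial (q.parts.count i)

lemma descPochhammer_eval_eq_fallFac (t : ℝ) (n : ℕ) :
    (descPochhammer ℝ n).eval t = fallFac t n := by
  induction n with
  | zero => simp [fallFac]
  | succ n ih =>
    rw [descPochhammer_succ_right, eval_mul, ih]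
    conv_rhs => rw [fallFac, Finset.prod_range_succ]
    rw [← fallFac]
    simp

lemma fallFac_nat_cast (x n : ℕ) : fallFac (x : ℝ) n = (x.descFactorial n : ℝ) := by
  rw [← descPochhammer_eval_eq_fallFac, descPochhammer_eval_eq_descFactorial]

lemma fallFac_div_factorial (x n : ℕ) :
    fallFac (x : ℝ) n / (n.factorial : ℝ) = (x.choose n : ℝ) := by
  have hne : (n.factorial : ℝ) ≠ 0 := by exact_mod_cast (Nat.factorial_pos n).ne'
  rw [div_eq_iff hne, fallFac_nat_cast, Nat.descFactorial_eq_factorial_mul_choose]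
  push_cast
  ring

lemma multFact_factorial {m : ℕ} (q : Nat.Partition m) :
    multFact q * Nat.multinomial q.parts.toFinset (fun a => q.parts.count a)
      = (Multiset.card q.parts).factorial := by
  rw [multFact]
  rw [Nat.multinomial_spec, Multiset.toFinset_sum_count_eq]

lemma multFact_pos {m : ℕ} (q : Nat.Partition m) : 0 < multFact q :=
  Finset.prod_pos fun _ _ => Nat.factorial_pos _

lemma stmt_nat (m x y : ℕ) :
    ∑ q : Nat.Partition m,
      (q.parts.map fun a => fallFac (x:ℝ) a / Nat.factorial a).prod *
        (fallFac (y:ℝ) (Multiset.card q.parts) / multFact q)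
    = fallFac ((x:ℝ) * (y:ℝ)) m / Nat.factorial m := by
  have hterm : ∀ q : Nat.Partition m,
      (q.parts.map fun a => fallFac (x:ℝ) a / Nat.factorial a).prod *
        (fallFac (y:ℝ) (Multiset.card q.parts) / multFact q)
      = ((q.parts.map (x.choose ·)).prod *
          (y.choose (Multiset.card q.parts)
            * Nat.multinomial q.parts.toFinset (fun a => q.parts.count a)) : ℕ) := by
    intro q
    have h1 : (q.parts.map fun a => fallFac (x:ℝ) a / Nat.factorial a).prod
        = (((q.parts.map (x.choose ·)).prod : ℕ) : ℝ) := by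
      rw [Nat.cast_multiset_prod, Multiset.map_map]
      exact congrArg Multiset.prod (Multiset.map_congr rfl fun a _ => fallFac_div_factorial x a)
    have h2 : fallFac (y:ℝ) (Multiset.card q.parts) / multFact q
        = ((y.choose (Multiset.card q.parts)
            * Nat.multinomial q.parts.toFinset (fun a => q.parts.count a) : ℕ) : ℝ) := by
      rw [fallFac_nat_cast, Nat.descFactorial_eq_factorial_mul_choose,
        ← multFact_factorial q]
      push_cast
      rw [div_eq_iff (by exact_mod_cast (multFact_pos q).ne')]
      ring
    rw [h1, h2]
    push_cast
    ring
  have hne : (m.factorial : ℝ) ≠ 0 := by exact_mod_cast (Nat.factorial_pos m).ne'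
  rw [Finset.sum_congr rfl fun q _ => hterm q]
  rw [← Nat.cast_sum, key m x y, ← Nat.cast_mul, fallFac_nat_cast, eq_div_iff hne]
  have h3 : (x*y).choose m * m.factorial = (x*y).descFactorial m := by
    rw [Nat.descFactorial_eq_factorial_mul_choose, mul_comm]
  exact_mod_cast h3

lemma poly_ext {f g : Polynomial ℝ} (h : ∀ n : ℕ, f.eval (n:ℝ) = g.eval (n:ℝ)) : f = g :=
  Polynomial.eq_of_infinite_eval_eq f g
    (Set.infinite_of_injective_forall_mem (f := fun n : ℕ => (n:ℝ))
      Nat.cast_injective (fun n => h n))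

lemma stmt_natx (m x : ℕ) (y : ℝ) :
    ∑ q : Nat.Partition m,
      (q.parts.map fun a => fallFac (x:ℝ) a / Nat.factorial a).prod *
        (fallFac y (Multiset.card q.parts) / multFact q)
    = fallFac ((x:ℝ) * y) m / Nat.factorial m := by
  have heval1 : ∀ t : ℝ,
      Polynomial.eval t (∑ q : Nat.Partition m,
        Polynomial.C ((q.parts.map fun a => fallFac (x:ℝ) a / Nat.factorial a).prod
            * (multFact q : ℝ)⁻¹) * descPochhammer ℝ (Multiset.card q.parts))
      = ∑ q : Nat.Partition m,
          (q.parts.map fun a => fallFac (x:ℝ) a / Nat.factorial a).prod *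
            (fallFac t (Multiset.card q.parts) / multFact q) := by
    intro t
    rw [Polynomial.eval_finset_sum]
    refine Finset.sum_congr rfl fun q _ => ?_
    rw [Polynomial.eval_mul, Polynomial.eval_C, descPochhammer_eval_eq_fallFac]
    rw [div_eq_mul_inv]
    ring
  have heval2 : ∀ t : ℝ,
      Polynomial.eval t (Polynomial.C ((m.factorial : ℝ))⁻¹ *
        ∏ i ∈ Finset.range m, (Polynomial.C (x:ℝ) * Polynomial.X - Polynomial.C (i:ℝ)))
      = fallFac ((x:ℝ) * t) m / Nat.factorial m := by
    intro t
    rw [Polynomial.eval_mul, Polynomial.eval_C, Polynomial.eval_prod, fallFac]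
    rw [div_eq_mul_inv, mul_comm]
    congr 1
    refine Finset.prod_congr rfl fun i _ => ?_
    simp
  have hpoly : (∑ q : Nat.Partition m,
        Polynomial.C ((q.parts.map fun a => fallFac (x:ℝ) a / Nat.factorial a).prod
            * (multFact q : ℝ)⁻¹) * descPochhammer ℝ (Multiset.card q.parts))
      = Polynomial.C ((m.factorial : ℝ))⁻¹ *
          ∏ i ∈ Finset.range m, (Polynomial.C (x:ℝ) * Polynomial.X - Polynomial.C (i:ℝ)) := by
    apply poly_ext
    intro n
    rw [heval1, heval2]
    exact stmt_nat m x n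
  have := congrArg (Polynomial.eval y) hpoly
  rw [heval1, heval2] at this
  exact this

theorem stmt2_aux (m : ℕ) (x y : ℝ) :
    ∑ q : Nat.Partition m,
      (q.parts.map fun a => fallFac x a / Nat.factorial a).prod *
        (fallFac y (Multiset.card q.parts) / multFact q)
    = fallFac (x * y) m / Nat.factorial m := by
  have heval1 : ∀ t : ℝ,
      Polynomial.eval t (∑ q : Nat.Partition m,
        (q.parts.map fun a => Polynomial.C ((a.factorial : ℝ))⁻¹ * descPochhammer ℝ a).prod
          * Polynomial.C (fallFac y (Multiset.card q.parts) / multFact q))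
      = ∑ q : Nat.Partition m,
          (q.parts.map fun a => fallFac t a / Nat.factorial a).prod *
            (fallFac y (Multiset.card q.parts) / multFact q) := by
    intro t
    rw [Polynomial.eval_finset_sum]
    refine Finset.sum_congr rfl fun q _ => ?_
    rw [Polynomial.eval_mul, Polynomial.eval_C]
    congr 1
    rw [Polynomial.eval_multiset_prod, Multiset.map_map]
    refine congrArg Multiset.prod (Multiset.map_congr rfl fun a _ => ?_)
    simp only [Function.comp_apply, Polynomial.coe_evalRingHom, Polynomial.eval_mul,
      Polynomial.eval_C, descPochhammer_eval_eq_fallFac]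
    rw [div_eq_mul_inv]
    ring
  have heval2 : ∀ t : ℝ,
      Polynomial.eval t (Polynomial.C ((m.factorial : ℝ))⁻¹ *
        ∏ i ∈ Finset.range m, (Polynomial.C y * Polynomial.X - Polynomial.C (i:ℝ)))
      = fallFac (t * y) m / Nat.factorial m := by
    intro t
    rw [Polynomial.eval_mul, Polynomial.eval_C, Polynomial.eval_prod, fallFac]
    rw [div_eq_mul_inv, mul_comm]
    congr 1
    refine Finset.prod_congr rfl fun i _ => ?_
    simp only [Polynomial.eval_sub, Polynomial.eval_mul, Polynomial.eval_C, Polynomial.eval_X]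
    ring
  have hpoly : (∑ q : Nat.Partition m,
        (q.parts.map fun a => Polynomial.C ((a.factorial : ℝ))⁻¹ * descPochhammer ℝ a).prod
          * Polynomial.C (fallFac y (Multiset.card q.parts) / multFact q))
      = Polynomial.C ((m.factorial : ℝ))⁻¹ *
          ∏ i ∈ Finset.range m, (Polynomial.C y * Polynomial.X - Polynomial.C (i:ℝ)) := by
    apply poly_ext
    intro n
    rw [heval1, heval2]
    exact stmt_natx m n y
  have := congrArg (Polynomial.eval x) hpoly
  rw [heval1, heval2] at this
  exact this

theorem stmt2 (m : ℕ) (x y : ℝ) :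
    ∑ q : Nat.Partition m,
      (q.parts.map fun a => fallFac x a / Nat.factorial a).prod *
        (fallFac y (Multiset.card q.parts) / multFact q)
    = fallFac (x * y) m / Nat.factorial m := by
  exact stmt2_aux m x y
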